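/- If λ = (λ₁, ..., λ_c) is a partition of n with all parts positive and λ₁ - 1 ≤ c, then the Bulgarian solitaire move B(λ), obtained by decreasing each part by 1 (discarding zeros) and adding a new part equal to c, preserves the potential energy U(λ) = Σ (i+j) over all cells (i,j) of the Young diagram of λ. -/

import Mathlib

/-- A partition of `n`: a multiset of positive integers summing to `n`
(multisets model nonincreasing sequences, since order is irrelevant). -/
def IsPartition (n : ℕ) (l : Multiset ℕ) : Prop :=
  l.sum = n ∧ ∀ x ∈ l, 0 < x

/-- The Bulgarian solitaire move: remove one card from each pile, discard empty
piles, and add a new pile whose size is the number of old piles. -/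
def bulg (l : Multiset ℕ) : Multiset ℕ :=
  (Multiset.card l ::ₘ l.map (· - 1)).filter (0 < ·)

/-- The staircase partition `(k, k-1, …, 2, 1)`. -/
def staircase (k : ℕ) : Multiset ℕ := (Multiset.range k).map (· + 1)

/-- Potential energy `U(λ) = Σ (i + j)` over the cells of the Young diagram,
the rows taken in nonincreasing order. -/
def energy (l : Multiset ℕ) : ℕ :=
  ((l.sort (· ≥ ·)).zipIdx.map fun p => ∑ j ∈ Finset.range p.1, ((p.2 + 1) + (j + 1))).sum

/-- helper arithmetic sum -/
def S (c a : ℕ) : ℕ := ∑ j ∈ Finset.range a, (c + j)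

lemma S_succ (c a : ℕ) : S c (a + 1) = c + S (c + 1) a := by
  unfold S
  rw [Finset.sum_range_succ']
  rw [add_comm]
  congr 1
  exact Finset.sum_congr rfl fun j _ => by omega

/-- recursive energy of a list of row lengths with starting row index k (0-based) -/
def g (k : ℕ) : List ℕ → ℕ
  | [] => 0
  | a :: L => S (k + 2) a + g (k + 1) L

lemma enum_energy (L : List ℕ) : ∀ k,
    ((L.zipIdx k).map fun p => ∑ j ∈ Finset.range p.1, ((p.2 + 1) + (j + 1))).sum = g k L := by
  induction L with
  | nil => intro k; simp [g]
  | cons a L ih =>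
    intro k
    rw [List.zipIdx_cons, List.map_cons, List.sum_cons, ih]
    simp only [g]
    congr 1
    unfold S
    exact Finset.sum_congr rfl fun j _ => by omega

lemma g_ones (L : List ℕ) : ∀ k, (∀ x ∈ L, x = 1) → g k L = S (k + 2) L.length := by
  induction L with
  | nil => intro k _; simp [g, S]
  | cons a L ih =>
    intro k h
    have ha : a = 1 := h a (by simp)
    subst ha
    have hih := ih (k + 1) (fun x hx => h x (by simp [hx]))
    simp only [g, List.length_cons, S_succ]
    simp only [show k + 1 + 2 = k + 3 from by omega, show k + 2 + 1 = k + 3 from by omega] at hih ⊢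
    have h0 : S (k + 3) 0 = 0 := by simp [S]
    omega

lemma g_main (L : List ℕ) : ∀ k, L.Pairwise (· ≥ ·) → (∀ x ∈ L, 0 < x) →
    g (k + 1) ((L.map (· - 1)).filter (fun x => 0 < x)) + S (k + 2) L.length = g k L := by
  induction L with
  | nil => intro k _ _; simp [g, S]
  | cons a L ih =>
    intro k hs hp
    have hsL : L.Pairwise (· ≥ ·) := hs.of_cons
    have hpL : ∀ x ∈ L, 0 < x := fun x hx => hp x (by simp [hx])
    match a, hp a (by simp) with
    | 1, _ =>
      -- all elements of L are 1
      have hone : ∀ x ∈ L, x = 1 := by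
        intro x hx
        have := List.rel_of_pairwise_cons hs hx
        have := hpL x hx
        omega
      have hfil : ((1 :: L).map (· - 1)).filter (fun x => 0 < x) = [] := by
        rw [List.filter_eq_nil_iff]
        intro x hx
        simp only [List.map_cons, List.mem_cons, List.mem_map] at hx
        rcases hx with h | ⟨y, hy, rfl⟩
        · simp [h]
        · have := hone y hy; subst this; simp
      rw [hfil]
      have hone' := g_ones L (k + 1) hone
      simp only [g, List.length_cons, S_succ]
      simp only [show k + 1 + 2 = k + 3 from by omega, show k + 2 + 1 = k + 3 from by omega] at hone' ⊢
      have : S (k + 2) 1 = k + 2 := by simp [S]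
      have h0 : S (k + 3) 0 = 0 := by simp [S]
      omega
    | (m + 2), _ =>
      have hfil : (((m + 2) :: L).map (· - 1)).filter (fun x => 0 < x)
          = (m + 1) :: ((L.map (· - 1)).filter (fun x => 0 < x)) := by
        simp only [List.map_cons]
        rw [List.filter_cons_of_pos]
        · norm_num
        · simp
      rw [hfil]
      simp only [g, List.length_cons]
      have hih := ih (k + 1) hsL hpL
      have h1 : S (k + 2) (m + 2) = (k + 2) + S (k + 2 + 1) (m + 1) := S_succ _ _
      have h2 : S (k + 2) (L.length + 1) = (k + 2) + S (k + 2 + 1) L.length := S_succ _ _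
      simp only [show k + 1 + 2 = k + 3 from by omega, show k + 2 + 1 = k + 3 from by omega,
        show k + 1 + 1 = k + 2 from by omega] at hih h1 h2 ⊢
      omega

lemma sort_bulg (l : Multiset ℕ) (hc : 0 < Multiset.card l)
    (h : ∀ x ∈ l, x ≤ Multiset.card l + 1) :
    (bulg l).sort (· ≥ ·) =
      Multiset.card l :: (((l.sort (· ≥ ·)).map (· - 1)).filter (fun x => 0 < x)) := by
  set c := Multiset.card l with hcdef
  set T := (((l.sort (· ≥ ·)).map (· - 1)).filter (fun x => 0 < x)) with hT
  have hmemT : ∀ x ∈ T, x ≤ c := by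
    intro x hx
    have hx' : x ∈ (l.sort (· ≥ ·)).map (· - 1) := List.mem_of_mem_filter hx
    rcases List.mem_map.mp hx' with ⟨y, hy, rfl⟩
    have : y ∈ l := by rw [← Multiset.mem_sort (· ≥ ·)]; exact hy
    have := h y this
    omega
  have hsortT : T.Pairwise (· ≥ ·) := by
    apply List.Pairwise.sublist List.filter_sublist
    exact List.Pairwise.map _ (fun a b hab => by omega) (Multiset.pairwise_sort l (· ≥ ·))
  have hsorted : (c :: T).Pairwise (· ≥ ·) := List.pairwise_cons.mpr ⟨hmemT, hsortT⟩
  have hperm : List.Perm ((bulg l).sort (· ≥ ·)) (c :: T) := by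
    apply Multiset.coe_eq_coe.mp
    rw [Multiset.sort_eq]
    show bulg l = ((c :: T : List ℕ) : Multiset ℕ)
    rw [bulg, Multiset.filter_cons_of_pos _ hc, ← Multiset.cons_coe]
    congr 1
    rw [hT, ← Multiset.filter_coe, ← Multiset.map_coe, Multiset.sort_eq]
  exact List.Perm.eq_of_pairwise (fun a b _ _ h1 h2 => le_antisymm h2 h1) (Multiset.pairwise_sort _ _) hsorted hperm


/-- If the largest part satisfies λ₁ - 1 ≤ c where c is the number of parts
(i.e. every part is ≤ c + 1), then the Bulgarian solitaire move preserves the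
potential energy. -/
theorem bulg_energy_eq (n : ℕ) (l : Multiset ℕ) (hl : IsPartition n l)
    (h : ∀ x ∈ l, x ≤ Multiset.card l + 1) :
    energy (bulg l) = energy l := by
  rcases Nat.eq_zero_or_pos (Multiset.card l) with hc | hc
  · have : l = 0 := Multiset.card_eq_zero.mp hc
    subst this
    simp [bulg, energy, Multiset.filter_singleton]
  · have key := sort_bulg l hc h
    unfold energy
    rw [key, enum_energy, enum_energy]
    simp only [g]
    have hmain := g_main (l.sort (· ≥ ·)) 0 (Multiset.pairwise_sort _ _)
      (fun x hx => hl.2 x ((Multiset.mem_sort _).mp hx))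
    have hlen : (l.sort (· ≥ ·)).length = Multiset.card l := Multiset.length_sort _
    rw [hlen] at hmain
    omega
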